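/- arXiv:1008.1703 — 7 statements merged into one kernel-verified Lean document; each statement's English description precedes it below -/
import Mathlib

section
/- For a subset A of X = {1,...,n} with 1 < k < n, the hyperplane H_A defined by the equation ∑_{i∈A} x_i = 1 defines a split of the hypersimplex Δ(k,n) (i.e., a subdivision with exactly two maximal cells) if and only if 2 ≤ |A| ≤ n − k. Otherwise H_A induces the trivial subdivision of Δ(k,n). -/
/-- A point in the relative interior of the hypersimplex Δ(k,n). -/
def relintHS (k n : ℕ) (x : Fin n → ℝ) : Prop :=
  (∀ i, 0 < x i ∧ x i < 1) ∧ ∑ i, x i = (k : ℝ)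

/-- The hyperplane `H_A = {x : ∑_{i∈A} x_i = 1}` defines a split of the hypersimplex
Δ(k,n): it meets the relative interior and does not separate any edge of Δ(k,n).
Edges of Δ(k,n) connect vertices (k-subsets) differing by exchanging one element;
the hyperplane separates such an edge iff the vertex sums |A∩K| lie strictly on
opposite sides of 1. -/
def definesSplitHS (k n : ℕ) (A : Finset (Fin n)) : Prop :=
  (∃ x : Fin n → ℝ, relintHS k n x ∧ ∑ i ∈ A, x i = 1) ∧
  ∀ K L : Finset (Fin n), K.card = k → L.card = k →
    (K \ L).card = 1 → (L \ K).card = 1 →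
    ¬(((A ∩ K).card : ℝ) < 1 ∧ (1 : ℝ) < ((A ∩ L).card : ℝ))

lemma edge_ok (n k : ℕ) (A : Finset (Fin n)) :
    ∀ K L : Finset (Fin n), K.card = k → L.card = k →
    (K \ L).card = 1 → (L \ K).card = 1 →
    ¬(((A ∩ K).card : ℝ) < 1 ∧ (1 : ℝ) < ((A ∩ L).card : ℝ)) := by
  intro K L _ _ _ hLK ⟨h1, h2⟩
  have hK0 : (A ∩ K).card = 0 := by exact_mod_cast Nat.lt_one_iff.mp (by exact_mod_cast h1)
  have hL2 : 2 ≤ (A ∩ L).card := by exact_mod_cast h2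
  have hsub : A ∩ L ⊆ (A ∩ K) ∪ (L \ K) := by
    intro i hi
    simp only [Finset.mem_inter] at hi
    by_cases hiK : i ∈ K
    · exact Finset.mem_union_left _ (Finset.mem_inter.mpr ⟨hi.1, hiK⟩)
    · exact Finset.mem_union_right _ (Finset.mem_sdiff.mpr ⟨hi.2, hiK⟩)
  have := (Finset.card_le_card hsub).trans (Finset.card_union_le _ _)
  omega

lemma exists_iff (n k : ℕ) (hk : 1 < k) (hkn : k < n) (A : Finset (Fin n)) :
    (∃ x : Fin n → ℝ, relintHS k n x ∧ ∑ i ∈ A, x i = 1) ↔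
      2 ≤ A.card ∧ A.card ≤ n - k := by
  constructor
  · rintro ⟨x, ⟨hbd, hsum⟩, hA⟩
    have hAne : A.Nonempty := by
      rcases Finset.eq_empty_or_nonempty A with h | h
      · rw [h, Finset.sum_empty] at hA; exact absurd hA.symm one_ne_zero
      · exact h
    have h1 : (1 : ℝ) < A.card := by
      calc (1:ℝ) = ∑ i ∈ A, x i := hA.symm
        _ < ∑ i ∈ A, 1 := Finset.sum_lt_sum_of_nonempty hAne fun i _ => (hbd i).2
        _ = A.card := by simp
    have hcard2 : 2 ≤ A.card := by exact_mod_cast h1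
    have hcompl : ∑ i ∈ Aᶜ, x i = (k : ℝ) - 1 := by
      have := Finset.sum_add_sum_compl A x
      rw [hA, hsum] at this; linarith
    have hAcne : (Aᶜ : Finset (Fin n)).Nonempty := by
      rcases Finset.eq_empty_or_nonempty (Aᶜ : Finset (Fin n)) with h | h
      · exfalso
        rw [h, Finset.sum_empty] at hcompl
        have : (k : ℝ) = 1 := by linarith
        have : k = 1 := by exact_mod_cast this
        omega
      · exact h
    have h2 : (k : ℝ) - 1 < (Aᶜ : Finset (Fin n)).card := by
      calc (k:ℝ) - 1 = ∑ i ∈ Aᶜ, x i := hcompl.symm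
        _ < ∑ i ∈ Aᶜ, 1 := Finset.sum_lt_sum_of_nonempty hAcne fun i _ => (hbd i).2
        _ = _ := by simp
    have hcc : A.card + (Aᶜ : Finset (Fin n)).card = n := by
      simp [Finset.card_add_card_compl A]
    have : (k : ℝ) - 1 < (n : ℝ) - A.card := by
      have : ((Aᶜ : Finset (Fin n)).card : ℝ) = (n : ℝ) - A.card := by
        exact_mod_cast (by push_cast [← hcc]; ring : ((Aᶜ : Finset (Fin n)).card : ℝ) = (n:ℝ) - A.card)
      linarith
    have hnat : A.card + k < n + 1 := by exact_mod_cast (by push_cast; linarith : ((A.card + k : ℕ) : ℝ) < ((n + 1 : ℕ) : ℝ))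
    exact ⟨hcard2, by omega⟩
  · rintro ⟨h2, hnk⟩
    set a := A.card with ha
    have han : a ≤ n - k := hnk
    have hank : a + k ≤ n := by omega
    have hna : 0 < n - a := by omega
    have hapos : (0:ℝ) < a := by positivity
    have hnapos : (0:ℝ) < ((n - a : ℕ) : ℝ) := by exact_mod_cast hna
    refine ⟨fun i => if i ∈ A then (1:ℝ)/a else ((k:ℝ)-1)/((n-a : ℕ) : ℝ), ⟨?_, ?_⟩, ?_⟩
    · intro i
      by_cases hi : i ∈ A <;> simp only [hi, if_true, if_false]
      · constructor
        · positivity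
        · rw [div_lt_one hapos]; exact_mod_cast by omega
      · have hk1 : (1:ℝ) < k := by exact_mod_cast hk
        constructor
        · exact div_pos (by linarith) hnapos
        · rw [div_lt_one hnapos]
          have : k - 1 < n - a := by omega
          calc (k:ℝ) - 1 ≤ ((k-1 : ℕ) : ℝ) := by push_cast [Nat.cast_sub (le_of_lt hk)]; ring_nf; rfl
            _ < ((n-a : ℕ) : ℝ) := by exact_mod_cast this
    · rw [← Finset.sum_add_sum_compl A]
      have e1 : ∑ i ∈ A, (if i ∈ A then (1:ℝ)/a else ((k:ℝ)-1)/((n-a : ℕ) : ℝ)) = 1 := by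
        rw [Finset.sum_congr rfl fun i hi => if_pos hi, Finset.sum_const, nsmul_eq_mul]
        field_simp
        rw [ha]
      have e2 : ∑ i ∈ Aᶜ, (if i ∈ A then (1:ℝ)/a else ((k:ℝ)-1)/((n-a : ℕ) : ℝ)) = (k:ℝ) - 1 := by
        rw [Finset.sum_congr rfl fun i hi => if_neg (Finset.mem_compl.mp hi),
          Finset.sum_const, nsmul_eq_mul]
        have hcc : (Aᶜ : Finset (Fin n)).card = n - a := by
          have hcc' := Finset.card_add_card_compl A
          rw [Fintype.card_fin] at hcc'
          rw [ha]; omega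
        rw [hcc]; field_simp
      rw [e1, e2]; ring
    · rw [Finset.sum_congr rfl fun i hi => if_pos hi, Finset.sum_const, nsmul_eq_mul]
      field_simp
      rw [ha]

theorem stmt0 (n k : ℕ) (hk : 1 < k) (hkn : k < n) (A : Finset (Fin n)) :
    (definesSplitHS k n A ↔ 2 ≤ A.card ∧ A.card ≤ n - k) ∧
    (¬(2 ≤ A.card ∧ A.card ≤ n - k) →
      ¬∃ x : Fin n → ℝ, relintHS k n x ∧ ∑ i ∈ A, x i = 1) := by
  constructor
  · constructor
    · rintro ⟨hex, _⟩
      exact (exists_iff n k hk hkn A).mp hex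
    · intro h
      exact ⟨(exists_iff n k hk hkn A).mpr h, edge_ok n k A⟩
  · intro h hex
    exact h ((exists_iff n k hk hkn A).mp hex)
end

section
/- If |X| = n ≥ 2k−1, then for every nontrivial split S = {A,B} of X we have max(|A|,|B|) ≥ k, and hence the regular subdivision of Δ(k,n) induced by the weight −δ^k_S is nontrivial; moreover the split S of X can be recovered from this subdivision. -/
/-- `C` is a cell (face of the lower envelope) of the regular subdivision of the
hypersimplex Δ(k,n) induced by the weight function `w` on its vertices
(identified with k-subsets of `{1,…,n}`): there is an affine functional
`K ↦ ∑_{i∈K} a i + c` lying weakly below `w` and touching it exactly on `C`. -/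
def cellOf (k n : ℕ) (w : Finset (Fin n) → ℝ) (C : Set (Finset (Fin n))) : Prop :=
  ∃ (a : Fin n → ℝ) (c : ℝ), ∀ K : Finset (Fin n), K.card = k →
    ((∑ i ∈ K, a i) + c ≤ w K ∧ (((∑ i ∈ K, a i) + c = w K) ↔ K ∈ C))

/-- `C` is a maximal cell of the regular subdivision induced by `w`. -/
def maxCellOf (k n : ℕ) (w : Finset (Fin n) → ℝ) (C : Set (Finset (Fin n))) : Prop :=
  cellOf k n w C ∧ ∀ C', cellOf k n w C' → C ⊆ C' → C' = C

/-- The split k-dissimilarity of the split `{A, Aᶜ}` of `{1,…,n}`. -/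
def splitDiss (n : ℕ) (A : Finset (Fin n)) (K : Finset (Fin n)) : ℝ :=
  if (K ∩ A).Nonempty ∧ (K ∩ Aᶜ).Nonempty then 1 else 0

/-! ### Auxiliary lemmas -/

lemma splitDiss_le_one (n : ℕ) (A K : Finset (Fin n)) : splitDiss n A K ≤ 1 := by
  unfold splitDiss; split <;> norm_num

lemma splitDiss_eq_zero (n : ℕ) {A K : Finset (Fin n)} (h : K ⊆ A) :
    splitDiss n A K = 0 := by
  unfold splitDiss
  rw [if_neg]
  rintro ⟨-, z, hz⟩
  rw [Finset.mem_inter] at hz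
  exact (Finset.mem_compl.mp hz.2) (h hz.1)

lemma splitDiss_eq_one (n : ℕ) {A K : Finset (Fin n)}
    (h1 : (K ∩ A).Nonempty) (h2 : (K ∩ Aᶜ).Nonempty) : splitDiss n A K = 1 :=
  if_pos ⟨h1, h2⟩

lemma splitDiss_eq_one_iff (n : ℕ) (A K : Finset (Fin n)) :
    splitDiss n A K = 1 ↔ ((K ∩ A).Nonempty ∧ (K ∩ Aᶜ).Nonempty) := by
  unfold splitDiss
  split_ifs with hc
  · simp [hc]
  · norm_num [hc]

lemma splitDiss_compl (n : ℕ) (A K : Finset (Fin n)) :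
    splitDiss n Aᶜ K = splitDiss n A K := by
  unfold splitDiss
  rw [compl_compl, if_congr and_comm rfl rfl]

/-- The main exchange-argument contradiction: if an affine functional lies below
`-splitDiss n A` touching exactly on `C`, and `C` contains the three sets
`D∪{x1,x2}`, `D∪{x2,y1}`, `D∪{y1,y2}` with `x`'s in `A`, `y`'s in `Aᶜ`,
then we get `-2 = -splitDiss` on `D∪{y1,y2}`, absurd. -/
lemma recipe (k n : ℕ) (hk : 2 ≤ k) (A : Finset (Fin n)) (C : Set (Finset (Fin n)))
    (a : Fin n → ℝ) (c : ℝ)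
    (h : ∀ K : Finset (Fin n), K.card = k →
      ((∑ i ∈ K, a i) + c ≤ -splitDiss n A K ∧
        (((∑ i ∈ K, a i) + c = -splitDiss n A K) ↔ K ∈ C)))
    (D : Finset (Fin n)) (x1 x2 y1 y2 : Fin n)
    (hD : D.card = k - 2) (hDA : D ⊆ A)
    (hx1A : x1 ∈ A) (hx2A : x2 ∈ A) (hx12 : x1 ≠ x2)
    (hx1D : x1 ∉ D) (hx2D : x2 ∉ D)
    (hy1 : y1 ∈ Aᶜ) (hy2 : y2 ∈ Aᶜ) (hy12 : y1 ≠ y2)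
    (hKC : insert x1 (insert x2 D) ∈ C)
    (hLC : insert x2 (insert y1 D) ∈ C)
    (hNC : insert y1 (insert y2 D) ∈ C) : False := by
  have hy1A : y1 ∉ A := Finset.mem_compl.mp hy1
  have hy2A : y2 ∉ A := Finset.mem_compl.mp hy2
  have hy1D : y1 ∉ D := fun hh => hy1A (hDA hh)
  have hy2D : y2 ∉ D := fun hh => hy2A (hDA hh)
  have hx2y1 : x2 ≠ y1 := fun hh => hy1A (hh ▸ hx2A)
  have cardfact : ∀ u v : Fin n, u ≠ v → u ∉ D → v ∉ D →
      (insert u (insert v D)).card = k := by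
    intro u v h1 h2 h3
    rw [Finset.card_insert_of_notMem (by simp [Finset.mem_insert, h1, h2]),
      Finset.card_insert_of_notMem h3, hD]
    omega
  have sumfact : ∀ u v : Fin n, u ≠ v → u ∉ D → v ∉ D →
      (∑ i ∈ insert u (insert v D), a i) = a u + a v + ∑ i ∈ D, a i := by
    intro u v h1 h2 h3
    rw [Finset.sum_insert (by simp [Finset.mem_insert, h1, h2]), Finset.sum_insert h3]
    ring
  -- K
  have hKcard := cardfact x1 x2 hx12 hx1D hx2D
  have dK : splitDiss n A (insert x1 (insert x2 D)) = 0 := by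
    apply splitDiss_eq_zero
    intro z hz
    rcases Finset.mem_insert.mp hz with rfl | hz
    · exact hx1A
    rcases Finset.mem_insert.mp hz with rfl | hz
    · exact hx2A
    · exact hDA hz
  have fK := ((h _ hKcard).2.mpr hKC)
  rw [dK, sumfact x1 x2 hx12 hx1D hx2D] at fK
  -- L
  have hLcard := cardfact x2 y1 hx2y1 hx2D hy1D
  have dL : splitDiss n A (insert x2 (insert y1 D)) = 1 := by
    apply splitDiss_eq_one
    · exact ⟨x2, Finset.mem_inter.mpr ⟨Finset.mem_insert_self _ _, hx2A⟩⟩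
    · exact ⟨y1, Finset.mem_inter.mpr ⟨by simp, hy1⟩⟩
  have fL := ((h _ hLcard).2.mpr hLC)
  rw [dL, sumfact x2 y1 hx2y1 hx2D hy1D] at fL
  -- M
  have hx1y2 : x1 ≠ y2 := fun hh => hy2A (hh ▸ hx1A)
  have hMcard := cardfact x1 y2 hx1y2 hx1D hy2D
  have dM : splitDiss n A (insert x1 (insert y2 D)) = 1 := by
    apply splitDiss_eq_one
    · exact ⟨x1, Finset.mem_inter.mpr ⟨Finset.mem_insert_self _ _, hx1A⟩⟩
    · exact ⟨y2, Finset.mem_inter.mpr ⟨by simp, hy2⟩⟩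
  have fM := (h _ hMcard).1
  rw [dM, sumfact x1 y2 hx1y2 hx1D hy2D] at fM
  -- N
  have hNcard := cardfact y1 y2 hy12 hy1D hy2D
  have fN := ((h _ hNcard).2.mpr hNC)
  rw [sumfact y1 y2 hy12 hy1D hy2D] at fN
  have dN := splitDiss_le_one n A (insert y1 (insert y2 D))
  linarith

/-- The `k = 2` variant of the exchange argument. -/
lemma recipe2 (k n : ℕ) (hk : k = 2) (A : Finset (Fin n)) (C : Set (Finset (Fin n)))
    (a : Fin n → ℝ) (c : ℝ)
    (h : ∀ K : Finset (Fin n), K.card = k →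
      ((∑ i ∈ K, a i) + c ≤ -splitDiss n A K ∧
        (((∑ i ∈ K, a i) + c = -splitDiss n A K) ↔ K ∈ C)))
    (x1 x2 x2' y1 : Fin n)
    (hx1A : x1 ∈ A) (hx2A : x2 ∈ A) (hx2'A : x2' ∈ A) (hy1 : y1 ∈ Aᶜ)
    (h12 : x1 ≠ x2) (h12' : x1 ≠ x2') (h22 : x2 ≠ x2')
    (hP1 : ({x1, x2} : Finset (Fin n)) ∈ C) (hP2 : ({x2', y1} : Finset (Fin n)) ∈ C)
    (hP3 : ({x1, y1} : Finset (Fin n)) ∉ C) (hP4 : ({x2, x2'} : Finset (Fin n)) ∉ C) :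
    False := by
  have hy1A : y1 ∉ A := Finset.mem_compl.mp hy1
  have h1y : x1 ≠ y1 := fun hh => hy1A (hh ▸ hx1A)
  have h2'y : x2' ≠ y1 := fun hh => hy1A (hh ▸ hx2'A)
  have c1 : ({x1, x2} : Finset (Fin n)).card = k := by rw [Finset.card_pair h12]; omega
  have c2 : ({x2', y1} : Finset (Fin n)).card = k := by rw [Finset.card_pair h2'y]; omega
  have c3 : ({x1, y1} : Finset (Fin n)).card = k := by rw [Finset.card_pair h1y]; omega
  have c4 : ({x2, x2'} : Finset (Fin n)).card = k := by rw [Finset.card_pair h22]; omega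
  have d1 : splitDiss n A ({x1, x2} : Finset (Fin n)) = 0 := by
    apply splitDiss_eq_zero
    intro z hz
    rcases Finset.mem_insert.mp hz with rfl | hz
    · exact hx1A
    · rw [Finset.mem_singleton] at hz; exact hz ▸ hx2A
  have d4 : splitDiss n A ({x2, x2'} : Finset (Fin n)) = 0 := by
    apply splitDiss_eq_zero
    intro z hz
    rcases Finset.mem_insert.mp hz with rfl | hz
    · exact hx2A
    · rw [Finset.mem_singleton] at hz; exact hz ▸ hx2'A
  have d2 : splitDiss n A ({x2', y1} : Finset (Fin n)) = 1 := by
    apply splitDiss_eq_one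
    · exact ⟨x2', Finset.mem_inter.mpr ⟨Finset.mem_insert_self _ _, hx2'A⟩⟩
    · exact ⟨y1, Finset.mem_inter.mpr ⟨by simp, hy1⟩⟩
  have d3 : splitDiss n A ({x1, y1} : Finset (Fin n)) = 1 := by
    apply splitDiss_eq_one
    · exact ⟨x1, Finset.mem_inter.mpr ⟨Finset.mem_insert_self _ _, hx1A⟩⟩
    · exact ⟨y1, Finset.mem_inter.mpr ⟨by simp, hy1⟩⟩
  have f1 := (h _ c1).2.mpr hP1
  rw [d1, Finset.sum_pair h12] at f1
  have f2 := (h _ c2).2.mpr hP2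
  rw [d2, Finset.sum_pair h2'y] at f2
  have f3le := (h _ c3).1
  have f3ne : ¬((∑ i ∈ ({x1, y1} : Finset (Fin n)), a i) + c = -splitDiss n A {x1, y1}) :=
    fun hh => hP3 ((h _ c3).2.mp hh)
  have f3 : (∑ i ∈ ({x1, y1} : Finset (Fin n)), a i) + c < -splitDiss n A {x1, y1} :=
    lt_of_le_of_ne f3le f3ne
  rw [d3, Finset.sum_pair h1y] at f3
  have f4le := (h _ c4).1
  have f4ne : ¬((∑ i ∈ ({x2, x2'} : Finset (Fin n)), a i) + c = -splitDiss n A {x2, x2'}) :=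
    fun hh => hP4 ((h _ c4).2.mp hh)
  have f4 : (∑ i ∈ ({x2, x2'} : Finset (Fin n)), a i) + c < -splitDiss n A {x2, x2'} :=
    lt_of_le_of_ne f4le f4ne
  rw [d4, Finset.sum_pair h22] at f4
  linarith

/-- Affine data certifying that the crossing set of `Y` is a cell of the
subdivision induced by `-splitDiss n A`. -/
def cdata (k n : ℕ) (A Y : Finset (Fin n)) : Prop :=
  ∃ (a : Fin n → ℝ) (c : ℝ), ∀ K : Finset (Fin n), K.card = k →
    ((∑ i ∈ K, a i) + c ≤ -splitDiss n A K ∧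
      (((∑ i ∈ K, a i) + c = -splitDiss n A K) ↔
        ((K ∩ Y).Nonempty ∧ (K ∩ Yᶜ).Nonempty)))

lemma cross_compl_iff (n : ℕ) (Y K : Finset (Fin n)) :
    ((K ∩ Yᶜ).Nonempty ∧ (K ∩ Yᶜᶜ).Nonempty) ↔
      ((K ∩ Y).Nonempty ∧ (K ∩ Yᶜ).Nonempty) := by
  rw [compl_compl]; exact and_comm

lemma cdata_complA (k n : ℕ) {A Y : Finset (Fin n)} (h : cdata k n A Y) :
    cdata k n Aᶜ Y := by
  obtain ⟨a, c, h⟩ := h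
  exact ⟨a, c, fun K hK => by rw [splitDiss_compl]; exact h K hK⟩

lemma cdata_complY (k n : ℕ) {A Y : Finset (Fin n)} (h : cdata k n A Y) :
    cdata k n A Yᶜ := by
  obtain ⟨a, c, h⟩ := h
  refine ⟨a, c, fun K hK => ⟨(h K hK).1, ?_⟩⟩
  rw [(h K hK).2]
  exact (cross_compl_iff n Y K).symm

lemma crossCell (k n : ℕ) (A : Finset (Fin n)) :
    cellOf k n (fun K => -splitDiss n A K)
      {K | (K ∩ A).Nonempty ∧ (K ∩ Aᶜ).Nonempty} := by
  refine ⟨fun _ => 0, -1, fun K hK => ?_⟩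
  have h1 := splitDiss_le_one n A K
  constructor
  · simp only [Finset.sum_const_zero, zero_add]
    linarith
  · rw [Finset.sum_const_zero, zero_add]
    show -1 = -splitDiss n A K ↔ _
    constructor
    · intro he
      have h2 : splitDiss n A K = 1 := by linarith
      exact (splitDiss_eq_one_iff n A K).mp h2
    · intro hc
      rw [splitDiss_eq_one n hc.1 hc.2]

/-- Case where all four "corners" of the pair of splits are nonempty. -/
lemma caseAll (k n : ℕ) (hk : 2 ≤ k) (A Y : Finset (Fin n)) (hA : k ≤ A.card)
    (hP : (A ∩ Y).Nonempty) (hQ : (A ∩ Yᶜ).Nonempty)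
    (hR : (Aᶜ ∩ Y).Nonempty) (hS : (Aᶜ ∩ Yᶜ).Nonempty)
    (hf : cdata k n A Y) : False := by
  obtain ⟨a, c, h⟩ := hf
  obtain ⟨x1, hx1⟩ := hP
  obtain ⟨x2, hx2⟩ := hQ
  obtain ⟨y1, hy1⟩ := hR
  obtain ⟨y2, hy2⟩ := hS
  rw [Finset.mem_inter] at hx1 hx2 hy1 hy2
  have hx12 : x1 ≠ x2 := fun e => (Finset.mem_compl.mp hx2.2) (e ▸ hx1.2)
  have hy12 : y1 ≠ y2 := fun e => (Finset.mem_compl.mp hy2.2) (e ▸ hy1.2)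
  have hsd : k - 2 ≤ (A \ {x1, x2}).card := by
    have h1 := Finset.card_sdiff_add_card A {x1, x2}
    have h2 : ({x1, x2} : Finset (Fin n)).card ≤ 2 :=
      le_trans (Finset.card_insert_le _ _) (by simp)
    have h3 : A.card ≤ (A ∪ {x1, x2}).card := Finset.card_le_card Finset.subset_union_left
    omega
  obtain ⟨D, hDsub, hDcard⟩ := Finset.exists_subset_card_eq hsd
  have hDA : D ⊆ A := hDsub.trans Finset.sdiff_subset
  have hx1D : x1 ∉ D := fun hm => (Finset.mem_sdiff.mp (hDsub hm)).2 (by simp)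
  have hx2D : x2 ∉ D := fun hm => (Finset.mem_sdiff.mp (hDsub hm)).2 (by simp)
  refine recipe k n hk A {K | (K ∩ Y).Nonempty ∧ (K ∩ Yᶜ).Nonempty} a c h
    D x1 x2 y1 y2 hDcard hDA hx1.1 hx2.1 hx12 hx1D hx2D hy1.1 hy2.1 hy12 ?_ ?_ ?_
  · exact ⟨⟨x1, Finset.mem_inter.mpr ⟨by simp, hx1.2⟩⟩,
      ⟨x2, Finset.mem_inter.mpr ⟨by simp, hx2.2⟩⟩⟩
  · exact ⟨⟨y1, Finset.mem_inter.mpr ⟨by simp, hy1.2⟩⟩,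
      ⟨x2, Finset.mem_inter.mpr ⟨by simp, hx2.2⟩⟩⟩
  · exact ⟨⟨y1, Finset.mem_inter.mpr ⟨by simp, hy1.2⟩⟩,
      ⟨y2, Finset.mem_inter.mpr ⟨by simp, hy2.2⟩⟩⟩

/-- Case where the corner `Aᶜ ∩ Yᶜ` is empty. -/
lemma caseS (k n : ℕ) (hk : 2 ≤ k) (hn : 2 * k - 1 ≤ n) (A Y : Finset (Fin n))
    (hS : Aᶜ ∩ Yᶜ = ∅) (hP : (A ∩ Y).Nonempty)
    (hq : 2 ≤ (A ∩ Yᶜ).card) (hr : 2 ≤ (Aᶜ ∩ Y).card)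
    (hf : cdata k n A Y) (hg : cdata k n Y A) : False := by
  obtain ⟨x1, hx1⟩ := hP
  rw [Finset.mem_inter] at hx1
  have hEmp : ∀ x : Fin n, ¬(x ∈ Aᶜ ∧ x ∈ Yᶜ) := by
    intro x hx
    exact Finset.eq_empty_iff_forall_notMem.mp hS x (Finset.mem_inter.mpr hx)
  have hAcY : Aᶜ ⊆ Y := by
    intro z hz
    by_contra hzY
    exact hEmp z ⟨hz, Finset.mem_compl.mpr hzY⟩
  rcases eq_or_lt_of_le hk with hk2 | hk3
  · -- k = 2
    obtain ⟨x2, hx2, x2', hx2', hne⟩ := Finset.one_lt_card.mp (by omega : 1 < (A ∩ Yᶜ).card)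
    rw [Finset.mem_inter] at hx2 hx2'
    obtain ⟨y1, hy1⟩ := Finset.card_pos.mp (by omega : 0 < (Aᶜ ∩ Y).card)
    rw [Finset.mem_inter] at hy1
    obtain ⟨a, c, h⟩ := hf
    refine recipe2 k n hk2.symm A {K | (K ∩ Y).Nonempty ∧ (K ∩ Yᶜ).Nonempty} a c h
      x1 x2 x2' y1 hx1.1 hx2.1 hx2'.1 hy1.1
      (fun e => (Finset.mem_compl.mp hx2.2) (e ▸ hx1.2))
      (fun e => (Finset.mem_compl.mp hx2'.2) (e ▸ hx1.2)) hne ?_ ?_ ?_ ?_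
    · exact ⟨⟨x1, Finset.mem_inter.mpr ⟨by simp, hx1.2⟩⟩,
        ⟨x2, Finset.mem_inter.mpr ⟨by simp, hx2.2⟩⟩⟩
    · exact ⟨⟨y1, Finset.mem_inter.mpr ⟨by simp, hy1.2⟩⟩,
        ⟨x2', Finset.mem_inter.mpr ⟨by simp, hx2'.2⟩⟩⟩
    · rintro ⟨-, z, hz⟩
      rw [Finset.mem_inter] at hz
      have hzY := Finset.mem_compl.mp hz.2
      rcases Finset.mem_insert.mp hz.1 with rfl | hz1
      · exact hzY hx1.2
      · rw [Finset.mem_singleton] at hz1; exact hzY (hz1 ▸ hy1.2)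
    · rintro ⟨⟨z, hz⟩, -⟩
      rw [Finset.mem_inter] at hz
      rcases Finset.mem_insert.mp hz.1 with rfl | hz1
      · exact (Finset.mem_compl.mp hx2.2) hz.2
      · rw [Finset.mem_singleton] at hz1
        exact (Finset.mem_compl.mp hx2'.2) (hz1 ▸ hz.2)
  · -- 2 < k
    have hcards := Finset.card_add_card_compl A
    rw [Fintype.card_fin] at hcards
    rcases (by omega : k ≤ A.card ∨ k ≤ Aᶜ.card) with hA | hAc
    · -- k ≤ |A|: apply `recipe` on (A, Y) using `hf`
      obtain ⟨x2, hx2, q', hq', hne22⟩ :=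
        Finset.one_lt_card.mp (by omega : 1 < (A ∩ Yᶜ).card)
      rw [Finset.mem_inter] at hx2 hq'
      obtain ⟨y1, hy1, y2, hy2, hyne⟩ :=
        Finset.one_lt_card.mp (by omega : 1 < (Aᶜ ∩ Y).card)
      rw [Finset.mem_inter] at hy1 hy2
      have hsd : k - 3 ≤ (A \ {x1, x2, q'}).card := by
        have h1 := Finset.card_sdiff_add_card A {x1, x2, q'}
        have h2 : ({x1, x2, q'} : Finset (Fin n)).card ≤ 3 := by
          apply le_trans (Finset.card_insert_le _ _)
          have := Finset.card_insert_le x2 ({q'} : Finset (Fin n))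
          simp only [Finset.card_singleton] at this ⊢
          omega
        have h3 : A.card ≤ (A ∪ {x1, x2, q'}).card :=
          Finset.card_le_card Finset.subset_union_left
        omega
      obtain ⟨D0, hD0sub, hD0card⟩ := Finset.exists_subset_card_eq hsd
      have hD0A : D0 ⊆ A := hD0sub.trans Finset.sdiff_subset
      have hq'D0 : q' ∉ D0 := fun hm => (Finset.mem_sdiff.mp (hD0sub hm)).2 (by simp)
      have hx1q : x1 ≠ q' := fun e => (Finset.mem_compl.mp hq'.2) (e ▸ hx1.2)
      have hx1D0 : x1 ∉ D0 := fun hm => (Finset.mem_sdiff.mp (hD0sub hm)).2 (by simp)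
      have hx2D0 : x2 ∉ D0 := fun hm => (Finset.mem_sdiff.mp (hD0sub hm)).2 (by simp)
      have hDcard : (insert q' D0).card = k - 2 := by
        rw [Finset.card_insert_of_notMem hq'D0, hD0card]; omega
      have hDA : insert q' D0 ⊆ A := Finset.insert_subset hq'.1 hD0A
      obtain ⟨a, c, h⟩ := hf
      refine recipe k n hk A {K | (K ∩ Y).Nonempty ∧ (K ∩ Yᶜ).Nonempty} a c h
        (insert q' D0) x1 x2 y1 y2 hDcard hDA hx1.1 hx2.1
        (fun e => (Finset.mem_compl.mp hx2.2) (e ▸ hx1.2))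
        (by simp [Finset.mem_insert, hx1q, hx1D0])
        (by simp [Finset.mem_insert, hne22, hx2D0])
        hy1.1 hy2.1 hyne ?_ ?_ ?_
      · exact ⟨⟨x1, Finset.mem_inter.mpr ⟨by simp, hx1.2⟩⟩,
          ⟨x2, Finset.mem_inter.mpr ⟨by simp, hx2.2⟩⟩⟩
      · exact ⟨⟨y1, Finset.mem_inter.mpr ⟨by simp, hy1.2⟩⟩,
          ⟨x2, Finset.mem_inter.mpr ⟨by simp, hx2.2⟩⟩⟩
      · exact ⟨⟨y1, Finset.mem_inter.mpr ⟨by simp, hy1.2⟩⟩,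
          ⟨q', Finset.mem_inter.mpr ⟨by simp, hq'.2⟩⟩⟩
    · -- k ≤ |Aᶜ|: apply `recipe` on (Y, A) using `hg`
      obtain ⟨x2, hx2, q', hq', hne22⟩ :=
        Finset.one_lt_card.mp (by omega : 1 < (Aᶜ ∩ Y).card)
      rw [Finset.mem_inter] at hx2 hq'
      obtain ⟨y1, hy1, y2, hy2, hyne⟩ :=
        Finset.one_lt_card.mp (by omega : 1 < (A ∩ Yᶜ).card)
      rw [Finset.mem_inter] at hy1 hy2
      have hYcard : k ≤ Y.card := le_trans hAc (Finset.card_le_card hAcY)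
      have hsd : k - 3 ≤ (Y \ {x1, x2, q'}).card := by
        have h1 := Finset.card_sdiff_add_card Y {x1, x2, q'}
        have h2 : ({x1, x2, q'} : Finset (Fin n)).card ≤ 3 := by
          apply le_trans (Finset.card_insert_le _ _)
          have := Finset.card_insert_le x2 ({q'} : Finset (Fin n))
          simp only [Finset.card_singleton] at this ⊢
          omega
        have h3 : Y.card ≤ (Y ∪ {x1, x2, q'}).card :=
          Finset.card_le_card Finset.subset_union_left
        omega
      obtain ⟨D0, hD0sub, hD0card⟩ := Finset.exists_subset_card_eq hsd
      have hD0Y : D0 ⊆ Y := hD0sub.trans Finset.sdiff_subset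
      have hq'D0 : q' ∉ D0 := fun hm => (Finset.mem_sdiff.mp (hD0sub hm)).2 (by simp)
      have hx1q : x1 ≠ q' := fun e => (Finset.mem_compl.mp hq'.1) (e ▸ hx1.1)
      have hx1D0 : x1 ∉ D0 := fun hm => (Finset.mem_sdiff.mp (hD0sub hm)).2 (by simp)
      have hx2D0 : x2 ∉ D0 := fun hm => (Finset.mem_sdiff.mp (hD0sub hm)).2 (by simp)
      have hDcard : (insert q' D0).card = k - 2 := by
        rw [Finset.card_insert_of_notMem hq'D0, hD0card]; omega
      have hDY : insert q' D0 ⊆ Y := Finset.insert_subset hq'.2 hD0Y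
      obtain ⟨a, c, h⟩ := hg
      refine recipe k n hk Y {K | (K ∩ A).Nonempty ∧ (K ∩ Aᶜ).Nonempty} a c h
        (insert q' D0) x1 x2 y1 y2 hDcard hDY hx1.2 hx2.2
        (fun e => (Finset.mem_compl.mp hx2.1) (e ▸ hx1.1))
        (by simp [Finset.mem_insert, hx1q, hx1D0])
        (by simp [Finset.mem_insert, hne22, hx2D0])
        hy1.2 hy2.2 hyne ?_ ?_ ?_
      · exact ⟨⟨x1, Finset.mem_inter.mpr ⟨by simp, hx1.1⟩⟩,
          ⟨x2, Finset.mem_inter.mpr ⟨by simp, hx2.1⟩⟩⟩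
      · exact ⟨⟨y1, Finset.mem_inter.mpr ⟨by simp, hy1.1⟩⟩,
          ⟨x2, Finset.mem_inter.mpr ⟨by simp, hx2.1⟩⟩⟩
      · exact ⟨⟨y1, Finset.mem_inter.mpr ⟨by simp, hy1.1⟩⟩,
          ⟨q', Finset.mem_inter.mpr ⟨by simp, hq'.1⟩⟩⟩

/-- The subdivision induced by `-splitDiss n A` is nontrivial. -/
lemma nontriv (k n : ℕ) (hk : 2 ≤ k) (A : Finset (Fin n)) (hA : k ≤ A.card)
    (hAc : 2 ≤ Aᶜ.card) :
    ¬ cellOf k n (fun K => -splitDiss n A K) {K | K.card = k} := by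
  rintro ⟨a, c, h⟩
  obtain ⟨K0, hK0A, hK0c⟩ := Finset.exists_subset_card_eq hA
  obtain ⟨x1, hx1, x2, hx2, hx12⟩ := Finset.one_lt_card.mp (by omega : 1 < K0.card)
  obtain ⟨y1, hy1, y2, hy2, hy12⟩ := Finset.one_lt_card.mp (by omega : 1 < Aᶜ.card)
  set D := (K0.erase x1).erase x2 with hDdef
  have hx2' : x2 ∈ K0.erase x1 := Finset.mem_erase.mpr ⟨fun e => hx12 e.symm, hx2⟩
  have hDc : D.card = k - 2 := by
    rw [hDdef, Finset.card_erase_of_mem hx2', Finset.card_erase_of_mem hx1, hK0c]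
    omega
  have hDA : D ⊆ A :=
    (Finset.erase_subset _ _).trans ((Finset.erase_subset _ _).trans hK0A)
  have hx1D : x1 ∉ D := fun hm => Finset.notMem_erase x1 K0 (Finset.mem_of_mem_erase hm)
  have hx2D : x2 ∉ D := Finset.notMem_erase _ _
  have hy1A : y1 ∉ A := Finset.mem_compl.mp hy1
  have hy2A : y2 ∉ A := Finset.mem_compl.mp hy2
  have hy1D : y1 ∉ D := fun hm => hy1A (hDA hm)
  have hy2D : y2 ∉ D := fun hm => hy2A (hDA hm)
  have hx2y1 : x2 ≠ y1 := fun e => hy1A (e ▸ hK0A hx2)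
  have cardfact : ∀ u v : Fin n, u ≠ v → u ∉ D → v ∉ D →
      (insert u (insert v D)).card = k := by
    intro u v h1 h2 h3
    rw [Finset.card_insert_of_notMem (by simp [Finset.mem_insert, h1, h2]),
      Finset.card_insert_of_notMem h3, hDc]
    omega
  exact recipe k n hk A {K | K.card = k} a c h D x1 x2 y1 y2 hDc hDA
    (hK0A hx1) (hK0A hx2) hx12 hx1D hx2D hy1 hy2 hy12
    (cardfact x1 x2 hx12 hx1D hx2D)
    (cardfact x2 y1 hx2y1 hx2D hy1D)
    (cardfact y1 y2 hy12 hy1D hy2D)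

/-- If `n ≥ 2k−1` then for every nontrivial split `{A, Aᶜ}` of `X` we have
`max(|A|,|Aᶜ|) ≥ k`; hence the regular subdivision of Δ(k,n) induced by `−δ^k_S`
is nontrivial (the full vertex set is not a cell), and the split can be recovered
from the subdivision: any nontrivial split inducing the same subdivision equals
`{A, Aᶜ}`. -/
theorem stmt5 (n k : ℕ) (hk : 1 < k) (hkn : k < n) (hn : 2 * k - 1 ≤ n)
    (A : Finset (Fin n)) (hntA : 2 ≤ A.card) (hntB : 2 ≤ Aᶜ.card) :
    k ≤ max A.card Aᶜ.card ∧
    ¬cellOf k n (fun K => -splitDiss n A K) {K | K.card = k} ∧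
    (∀ A' : Finset (Fin n), 2 ≤ A'.card → 2 ≤ A'ᶜ.card →
      {C | cellOf k n (fun K => -splitDiss n A K) C} =
        {C | cellOf k n (fun K => -splitDiss n A' K) C} →
      A' = A ∨ A' = Aᶜ) := by
  have hk2 : 2 ≤ k := hk
  have hcards := Finset.card_add_card_compl A
  rw [Fintype.card_fin] at hcards
  have hmax : k ≤ A.card ∨ k ≤ Aᶜ.card := by omega
  refine ⟨le_max_iff.mpr hmax, ?_, ?_⟩
  · -- nontriviality
    rcases hmax with hA | hAc
    · exact nontriv k n hk2 A hA hntB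
    · have e : (fun K => -splitDiss n Aᶜ K) = (fun K => -splitDiss n A K) :=
        funext fun K => by rw [splitDiss_compl]
      have h2 := nontriv k n hk2 Aᶜ hAc (by simpa using hntA)
      rwa [e] at h2
  · -- recovery of the split
    intro A' hA'2 hA'c2 hfam
    by_contra hcon
    push_neg at hcon
    obtain ⟨hne1, hne2⟩ := hcon
    have hmem := Set.ext_iff.mp hfam
    have hf : cdata k n A A' := (hmem _).mpr (crossCell k n A')
    have hg : cdata k n A' A := (hmem _).mp (crossCell k n A)
    have sub_of_empty : ∀ s t : Finset (Fin n), s ∩ t = ∅ → ∀ x ∈ s, x ∉ t := by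
      intro s t hst x hx hxt
      exact Finset.eq_empty_iff_forall_notMem.mp hst x (Finset.mem_inter.mpr ⟨hx, hxt⟩)
    rcases Finset.eq_empty_or_nonempty (A ∩ A') with hP | hP
    · -- corner P = A ∩ A' empty
      have hAsub : A ⊆ A'ᶜ := fun x hx => Finset.mem_compl.mpr (sub_of_empty _ _ hP x hx)
      have hA'sub : A' ⊆ Aᶜ := fun x hx =>
        Finset.mem_compl.mpr (fun hxA => sub_of_empty _ _ hP x hxA hx)
      have hSne : (Aᶜ ∩ A'ᶜ).Nonempty := by
        rcases Finset.eq_empty_or_nonempty (Aᶜ ∩ A'ᶜ) with hS | hS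
        · exfalso
          apply hne2
          apply Finset.Subset.antisymm hA'sub
          intro x hx
          by_contra hxA'
          exact sub_of_empty _ _ hS x hx (Finset.mem_compl.mpr hxA')
        · exact hS
      refine caseS k n hk2 hn Aᶜ A'ᶜ (by simpa using hP) hSne ?_ ?_
        (cdata_complY k n (cdata_complA k n hf)) (cdata_complY k n (cdata_complA k n hg))
      · rw [compl_compl]
        exact le_trans hA'2 (Finset.card_le_card fun x hx =>
          Finset.mem_inter.mpr ⟨hA'sub hx, hx⟩)
      · rw [compl_compl]
        exact le_trans hntA (Finset.card_le_card fun x hx =>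
          Finset.mem_inter.mpr ⟨hx, hAsub hx⟩)
    rcases Finset.eq_empty_or_nonempty (A ∩ A'ᶜ) with hQ | hQ
    · -- corner Q = A ∩ A'ᶜ empty
      have hAsub : A ⊆ A' := fun x hx => by
        by_contra hxA'
        exact sub_of_empty _ _ hQ x hx (Finset.mem_compl.mpr hxA')
      have hRne : (Aᶜ ∩ A').Nonempty := by
        rcases Finset.eq_empty_or_nonempty (Aᶜ ∩ A') with hR | hR
        · exfalso
          apply hne1
          apply Finset.Subset.antisymm _ hAsub
          intro x hx
          by_contra hxA
          exact sub_of_empty _ _ hR x (Finset.mem_compl.mpr hxA) hx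
        · exact hR
      refine caseS k n hk2 hn Aᶜ A' (by simpa using hQ) hRne ?_ ?_
        (cdata_complA k n hf) (cdata_complY k n hg)
      · exact le_trans hA'c2 (Finset.card_le_card fun x hx =>
          Finset.mem_inter.mpr ⟨Finset.mem_compl.mpr
            (fun hxA => Finset.mem_compl.mp hx (hAsub hxA)), hx⟩)
      · rw [compl_compl]
        exact le_trans hntA (Finset.card_le_card fun x hx =>
          Finset.mem_inter.mpr ⟨hx, hAsub hx⟩)
    rcases Finset.eq_empty_or_nonempty (Aᶜ ∩ A') with hR | hR
    · -- corner R = Aᶜ ∩ A' empty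
      have hA'sub : A' ⊆ A := fun x hx => by
        by_contra hxA
        exact sub_of_empty _ _ hR x (Finset.mem_compl.mpr hxA) hx
      refine caseS k n hk2 hn A A'ᶜ (by simpa using hR) hQ ?_ ?_
        (cdata_complY k n hf) (cdata_complA k n hg)
      · rw [compl_compl]
        exact le_trans hA'2 (Finset.card_le_card fun x hx =>
          Finset.mem_inter.mpr ⟨hA'sub hx, hx⟩)
      · exact le_trans hntB (Finset.card_le_card fun x hx =>
          Finset.mem_inter.mpr ⟨hx, Finset.mem_compl.mpr
            (fun hxA' => Finset.mem_compl.mp hx (hA'sub hxA'))⟩)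
    rcases Finset.eq_empty_or_nonempty (Aᶜ ∩ A'ᶜ) with hS | hS
    · -- corner S = Aᶜ ∩ A'ᶜ empty
      have h1 : A'ᶜ ⊆ A := fun x hx => by
        by_contra hxA
        exact sub_of_empty _ _ hS x (Finset.mem_compl.mpr hxA) hx
      have h2 : Aᶜ ⊆ A' := fun x hx => by
        by_contra hxA'
        exact sub_of_empty _ _ hS x hx (Finset.mem_compl.mpr hxA')
      exact caseS k n hk2 hn A A' hS hP
        (le_trans hA'c2 (Finset.card_le_card fun x hx =>
          Finset.mem_inter.mpr ⟨h1 hx, hx⟩))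
        (le_trans hntB (Finset.card_le_card fun x hx =>
          Finset.mem_inter.mpr ⟨hx, h2 hx⟩))
        hf hg
    · -- all four corners nonempty
      rcases hmax with hA | hAc
      · exact caseAll k n hk2 A A' hA hP hQ hR hS hf
      · exact caseAll k n hk2 Aᶜ A' hAc hR hS (by simpa using hP) (by simpa using hQ)
          (cdata_complA k n hf)
end

section
/- Suppose X = {1,...,n}, 1 < k < n, and there exist pairwise distinct i₀, i₁, i₂, i₃ ∈ X and subsets A₁, A₂, A₃ of X (each defining a split of Δ(k,n)) with i_m ∈ A_l iff m ∈ {0, l}, and |X ∖ (A₁ ∪ A₂ ∪ A₃)| ≥ k − 2. Then the set of splits {S_{A₁}, S_{A₂}, S_{A₃}} of Δ(k,n) is not weakly compatible: there is a face F of Δ(k,n) such that F ∩ H_{A₁} ∩ H_{A₂} ∩ H_{A₃} is a single point x with coordinates x_i = 1 for i in a chosen (k−2)-subset B of X∖(A₁∪A₂∪A₃), x_{i_j} = 1/2 for j = 0,1,2,3, and x_i = 0 otherwise; this point is not a vertex of Δ(k,n). -/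
open scoped Classical

/-- Membership in the hypersimplex Δ(k,n). -/
def memHS (k n : ℕ) (x : Fin n → ℝ) : Prop :=
  (∀ i, 0 ≤ x i ∧ x i ≤ 1) ∧ ∑ i, x i = (k : ℝ)

/-- In configuration (a): pairwise distinct `i₀,i₁,i₂,i₃` and sets `A₁,A₂,A₃`
(each defining a split of Δ(k,n)) with `i_m ∈ A_l ↔ m ∈ {0,l}` and
`|X∖(A₁∪A₂∪A₃)| ≥ k−2`, the splits `S_{A₁},S_{A₂},S_{A₃}` are not weakly
compatible: some face of Δ(k,n) meets the three hyperplanes in the single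
non-vertex point `x` with `x_i = 1` on a `(k−2)`-set `B ⊆ X∖(A₁∪A₂∪A₃)`,
`x_{i_j} = 1/2`, and `x_i = 0` otherwise. -/
theorem stmt9 (n k : ℕ) (hk : 1 < k) (hkn : k < n)
    (i : Fin 4 → Fin n) (hi : Function.Injective i)
    (A : Fin 3 → Finset (Fin n))
    (hsplit : ∀ l, 2 ≤ (A l).card ∧ (A l).card ≤ n - k)
    (hmem : ∀ (l : Fin 3) (m : Fin 4), i m ∈ A l ↔ (m = 0 ∨ m = l.succ))
    (hcard : k - 2 ≤ (Finset.univ \ (A 0 ∪ A 1 ∪ A 2)).card) :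
    ∃ B : Finset (Fin n), B ⊆ Finset.univ \ (A 0 ∪ A 1 ∪ A 2) ∧ B.card = k - 2 ∧
      ({y : Fin n → ℝ | memHS k n y ∧ (∀ j ∈ B, y j = 1) ∧
          (∀ j : Fin n, j ∉ B → (¬∃ m : Fin 4, j = i m) → y j = 0) ∧
          ∀ l : Fin 3, ∑ j ∈ A l, y j = 1} =
        {fun j : Fin n => if j ∈ B then (1 : ℝ) else
          if ∃ m : Fin 4, j = i m then 1 / 2 else 0}) ∧
      ¬∃ K : Finset (Fin n), K.card = k ∧
        (fun j : Fin n => if j ∈ B then (1 : ℝ) else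
          if ∃ m : Fin 4, j = i m then 1 / 2 else 0) =
        fun j => if j ∈ K then 1 else 0 := by
  have hk2 : 2 ≤ k := hk
  obtain ⟨B, hBsub, hBcard⟩ := Finset.exists_subset_card_eq hcard
  refine ⟨B, hBsub, hBcard, ?_, ?_⟩
  · -- set equality
    set x : Fin n → ℝ := fun j => if j ∈ B then (1 : ℝ) else
      if ∃ m : Fin 4, j = i m then 1 / 2 else 0 with hxdef
    -- basic membership facts
    have him : ∀ m : Fin 4, i m ∈ A 0 ∪ A 1 ∪ A 2 := by
      intro m
      fin_cases m
      · exact Finset.mem_union_left _ (Finset.mem_union_left _ ((hmem 0 0).mpr (Or.inl rfl)))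
      · exact Finset.mem_union_left _ (Finset.mem_union_left _ ((hmem 0 1).mpr (Or.inr (by decide))))
      · exact Finset.mem_union_left _ (Finset.mem_union_right _ ((hmem 1 2).mpr (Or.inr (by decide))))
      · exact Finset.mem_union_right _ ((hmem 2 3).mpr (Or.inr (by decide)))
    have himB : ∀ m : Fin 4, i m ∉ B := by
      intro m hmB
      have := hBsub hmB
      rw [Finset.mem_sdiff] at this
      exact this.2 (him m)
    have hAB : ∀ l : Fin 3, ∀ j ∈ A l, j ∉ B := by
      intro l j hj hjB
      have h2 := hBsub hjB
      rw [Finset.mem_sdiff] at h2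
      apply h2.2
      fin_cases l
      · exact Finset.mem_union_left _ (Finset.mem_union_left _ hj)
      · exact Finset.mem_union_left _ (Finset.mem_union_right _ hj)
      · exact Finset.mem_union_right _ hj
    have hne0 : ∀ l : Fin 3, i 0 ≠ i l.succ := fun l => hi.ne (Fin.succ_ne_zero l).symm
    have hT : ∀ l : Fin 3, (A l).filter (fun j => ∃ m : Fin 4, j = i m)
        = {i 0, i l.succ} := by
      intro l
      ext j
      simp only [Finset.mem_filter, Finset.mem_insert, Finset.mem_singleton]
      constructor
      · rintro ⟨hjA, m, rfl⟩
        rcases (hmem l m).mp hjA with h | h <;> subst h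
        · exact Or.inl rfl
        · exact Or.inr rfl
      · rintro (rfl | rfl)
        · exact ⟨(hmem l 0).mpr (Or.inl rfl), 0, rfl⟩
        · exact ⟨(hmem l l.succ).mpr (Or.inr rfl), l.succ, rfl⟩
    have hIB : Disjoint B (Finset.image i Finset.univ) := by
      rw [Finset.disjoint_right]
      intro j hj
      rw [Finset.mem_image] at hj
      obtain ⟨m, -, rfl⟩ := hj
      exact himB m
    -- generic computation of sums of a function satisfying conditions
    have key : ∀ y : Fin n → ℝ, (∀ j ∈ B, y j = 1) →
        (∀ j : Fin n, j ∉ B → (¬∃ m : Fin 4, j = i m) → y j = 0) →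
        (∑ j, y j = ((k:ℝ) - 2) + ∑ m : Fin 4, y (i m)) ∧
        (∀ l : Fin 3, ∑ j ∈ A l, y j = y (i 0) + y (i l.succ)) := by
      intro y hy1 hy0
      constructor
      · have hsub : B ∪ Finset.image i Finset.univ ⊆ Finset.univ := Finset.subset_univ _
        have h1 : ∑ j, y j = ∑ j ∈ B ∪ Finset.image i Finset.univ, y j := by
          refine (Finset.sum_subset hsub ?_).symm
          intro j _ hj
          rw [Finset.mem_union, not_or, Finset.mem_image] at hj
          refine hy0 j hj.1 ?_
          rintro ⟨m, rfl⟩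
          exact hj.2 ⟨m, Finset.mem_univ m, rfl⟩
        rw [h1, Finset.sum_union hIB, Finset.sum_image (fun a _ b _ h => hi h)]
        have hB : ∑ j ∈ B, y j = ((k : ℝ) - 2) := by
          rw [Finset.sum_congr rfl hy1, Finset.sum_const, hBcard]
          have : ((k - 2 : ℕ) : ℝ) = (k : ℝ) - 2 := by
            rw [Nat.cast_sub hk2]; norm_num
          simp [this]
        rw [hB]
      · intro l
        have h1 : ∑ j ∈ A l, y j
            = ∑ j ∈ (A l).filter (fun j => ∃ m : Fin 4, j = i m), y j := by
          refine (Finset.sum_subset (Finset.filter_subset _ _) ?_).symm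
          intro j hj hjf
          rw [Finset.mem_filter, not_and] at hjf
          exact hy0 j (hAB l j hj) (hjf hj)
        rw [h1, hT l, Finset.sum_pair (hne0 l)]
    have hsucc : ((0 : Fin 3).succ = (1 : Fin 4)) ∧ ((1 : Fin 3).succ = (2 : Fin 4)) ∧
        ((2 : Fin 3).succ = (3 : Fin 4)) := by decide
    -- x satisfies values
    have hx1 : ∀ j ∈ B, x j = 1 := by intro j hj; simp [hxdef, hj]
    have hxm : ∀ m : Fin 4, x (i m) = 1 / 2 := by
      intro m
      simp only [hxdef]
      rw [if_neg (himB m), if_pos ⟨m, rfl⟩]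
    have hx0 : ∀ j : Fin n, j ∉ B → (¬∃ m : Fin 4, j = i m) → x j = 0 := by
      intro j h1 h2
      simp only [hxdef]
      rw [if_neg h1, if_neg h2]
    ext y
    simp only [Set.mem_setOf_eq, Set.mem_singleton_iff]
    constructor
    · rintro ⟨⟨hbd, hsumy⟩, hy1, hy0, hyA⟩
      obtain ⟨ksum, lsum⟩ := key y hy1 hy0
      have e0 : y (i 0) + y (i 1) = 1 := by
        have := lsum 0; rw [hsucc.1] at this; rw [← this]; exact hyA 0
      have e1 : y (i 0) + y (i 2) = 1 := by
        have := lsum 1; rw [hsucc.2.1] at this; rw [← this]; exact hyA 1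
      have e2 : y (i 0) + y (i 3) = 1 := by
        have := lsum 2; rw [hsucc.2.2] at this; rw [← this]; exact hyA 2
      have etot : y (i 0) + y (i 1) + y (i 2) + y (i 3) = 2 := by
        have h4 : ∑ m : Fin 4, y (i m) = y (i 0) + y (i 1) + y (i 2) + y (i 3) :=
          Fin.sum_univ_four _
        rw [hsumy, h4] at ksum
        linarith
      have v0 : y (i 0) = 1 / 2 := by linarith
      have v1 : y (i 1) = 1 / 2 := by linarith
      have v2 : y (i 2) = 1 / 2 := by linarith
      have v3 : y (i 3) = 1 / 2 := by linarith
      funext j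
      by_cases hjB : j ∈ B
      · rw [hy1 j hjB, hx1 j hjB]
      · by_cases hje : ∃ m : Fin 4, j = i m
        · obtain ⟨m, rfl⟩ := hje
          rw [hxm m]
          fin_cases m
          · exact v0
          · exact v1
          · exact v2
          · exact v3
        · rw [hy0 j hjB hje, hx0 j hjB hje]
    · rintro rfl
      obtain ⟨ksum, lsum⟩ := key x hx1 hx0
      refine ⟨⟨?_, ?_⟩, hx1, hx0, ?_⟩
      · intro j
        simp only [hxdef]
        split_ifs <;> norm_num
      · rw [ksum]
        have : ∑ m : Fin 4, x (i m) = 2 := by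
          rw [Fin.sum_univ_four, hxm 0, hxm 1, hxm 2, hxm 3]; norm_num
        rw [this]; ring
      · intro l
        rw [lsum l, hxm 0, hxm l.succ]; norm_num
  · rintro ⟨K, hK, heq⟩
    have h0 := congrFun heq (i 0)
    have himB : i 0 ∉ B := by
      intro hmB
      have := hBsub hmB
      rw [Finset.mem_sdiff] at this
      exact this.2 (Finset.mem_union_left _ (Finset.mem_union_left _ ((hmem 0 0).mpr (Or.inl rfl))))
    rw [if_neg himB, if_pos ⟨0, rfl⟩] at h0
    split_ifs at h0 <;> norm_num at h0
end

section
/- Suppose X = {1,...,n}, 1 < k < n, 1 ≤ ν < k, and there exist pairwise distinct i₁, ..., i_{2ν+1} ∈ X and subsets A₁, ..., A_{2ν+1} of X (each defining a split of Δ(k,n)) with i_m ∈ A_l iff m ∈ {l, l+1} (indices modulo 2ν+1), and |X ∖ ⋃_{l=1}^{2ν+1} A_l| ≥ k − ν. Then the set {S_{A₁}, ..., S_{A_{2ν+1}}} of splits of Δ(k,n) is not weakly compatible. -/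
/-- The family of splits `{S_A : A ∈ 𝒜}` of Δ(k,n) is *not* weakly compatible,
expressed via the criterion: some subfamily of the hyperplanes `H_A` intersects a
face of Δ(k,n) (cut out by coordinates fixed to 0 on `Z` and to 1 on `O`) in a
single point which is not a vertex of Δ(k,n). -/
def notWeaklyCompatibleHS (k n : ℕ) (𝒜 : Set (Finset (Fin n))) : Prop :=
  ∃ 𝒜' ⊆ 𝒜, ∃ (Z O : Finset (Fin n)) (x : Fin n → ℝ),
    {y : Fin n → ℝ | memHS k n y ∧ (∀ i ∈ Z, y i = 0) ∧ (∀ i ∈ O, y i = 1) ∧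
        ∀ A ∈ 𝒜', ∑ i ∈ A, y i = 1} = {x} ∧
    ¬∃ K : Finset (Fin n), K.card = k ∧ x = fun i => if i ∈ K then (1 : ℝ) else 0

open Fin.NatCast Fin.CommRing in
lemma oddCycleHalf {ν : ℕ} (c : Fin (2 * ν + 1) → ℝ)
    (h : ∀ l, c l + c (l + 1) = 1) : ∀ l, c l = 1 / 2 := by
  have h2 : ∀ l, c (l + 2) = c l := by
    intro l
    have ha := h l; have hb := h (l + 1)
    have : c (l + 1 + 1) = c l := by linarith
    simpa [add_assoc, one_add_one_eq_two] using this
  have hstep : ∀ (j : ℕ) (l : Fin (2 * ν + 1)), c (l + (2 * j : ℕ)) = c l := by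
    intro j
    induction j with
    | zero => simp
    | succ m ih =>
      intro l
      have he : ((2 * (m + 1) : ℕ) : Fin (2 * ν + 1)) = ((2 * m : ℕ) : Fin (2*ν+1)) + 2 := by
        push_cast; ring
      rw [he, ← add_assoc, h2, ih]
  have hconst : ∀ l, c (l + 1) = c l := by
    intro l
    have hst := hstep ν (l + 1)
    have he : (l + 1) + ((2 * ν : ℕ) : Fin (2 * ν + 1)) = l := by
      have : ((2 * ν + 1 : ℕ) : Fin (2 * ν + 1)) = 0 := Fin.natCast_self _
      calc (l + 1) + ((2 * ν : ℕ) : Fin (2 * ν + 1))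
          = l + ((2 * ν + 1 : ℕ) : Fin (2 * ν + 1)) := by push_cast; ring
        _ = l := by rw [this, add_zero]
    rw [he] at hst
    exact hst.symm
  intro l
  have := h l
  rw [hconst l] at this
  linarith

/-- Configuration (b): an odd cycle `A₁,…,A_{2ν+1}` with `i_m ∈ A_l ↔ m ∈ {l,l+1}`
(mod `2ν+1`) and `|X∖⋃A_l| ≥ k−ν` makes the splits `S_{A₁},…,S_{A_{2ν+1}}` of
Δ(k,n) not weakly compatible. -/
theorem stmt10 (n k ν : ℕ) (hk : 1 < k) (hkn : k < n) (hν : 1 ≤ ν) (hνk : ν < k)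
    (i : Fin (2 * ν + 1) → Fin n) (hi : Function.Injective i)
    (A : Fin (2 * ν + 1) → Finset (Fin n))
    (hsplit : ∀ l, 2 ≤ (A l).card ∧ (A l).card ≤ n - k)
    (hmem : ∀ l m : Fin (2 * ν + 1), i m ∈ A l ↔ (m = l ∨ m = l + 1))
    (hcard : k - ν ≤ (Finset.univ \ Finset.univ.biUnion A).card) :
    notWeaklyCompatibleHS k n {B | ∃ l, B = A l} := by
  classical
  -- basic facts about Fin (2ν+1)
  have hone : (1 : Fin (2 * ν + 1)) ≠ 0 := by
    intro h
    have h0 : (1 : Fin (2 * ν + 1)).val = 0 := by rw [h]; rfl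
    rw [Fin.val_one', Nat.mod_eq_of_lt (by omega)] at h0
    omega
  have hlne : ∀ l : Fin (2 * ν + 1), l ≠ l + 1 := by
    intro l h
    exact hone (by simpa using (left_eq_add.mp h))
  have hine : ∀ l : Fin (2 * ν + 1), i l ≠ i (l + 1) := fun l h => hlne l (hi h)
  -- sets
  set I : Finset (Fin n) := Finset.image i Finset.univ with hIdef
  have hIcard : I.card = 2 * ν + 1 := by
    rw [hIdef, Finset.card_image_of_injective _ hi]; simp
  have hIU : ∀ j ∈ I, j ∈ Finset.univ.biUnion A := by
    intro j hj
    obtain ⟨m, _, rfl⟩ := Finset.mem_image.mp hj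
    exact Finset.mem_biUnion.mpr ⟨m, Finset.mem_univ _, (hmem m m).mpr (Or.inl rfl)⟩
  obtain ⟨S, hSW, hScard⟩ := Finset.exists_subset_card_eq hcard
  have hSU : ∀ j ∈ S, j ∉ Finset.univ.biUnion A := by
    intro j hj
    exact (Finset.mem_sdiff.mp (hSW hj)).2
  have hSI : ∀ j ∈ S, j ∉ I := fun j hj hjI => hSU j hj (hIU j hjI)
  have hSne : S.Nonempty := Finset.card_pos.mp (by omega)
  obtain ⟨w, hwS⟩ := hSne
  set O : Finset (Fin n) := S.erase w with hOdef
  have hwO : w ∉ O := Finset.notMem_erase _ _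
  have hOS : O ⊆ S := Finset.erase_subset _ _
  have hOcard : O.card = k - ν - 1 := by rw [hOdef, Finset.card_erase_of_mem hwS, hScard]
  have hwI : w ∉ I := hSI w hwS
  set Z : Finset (Fin n) := Finset.univ \ (I ∪ S) with hZdef
  -- the point x
  set x : Fin n → ℝ := fun j =>
    if j ∈ I then 1/2 else if j = w then 1/2 else if j ∈ O then 1 else 0 with hxdef
  have hxI : ∀ j ∈ I, x j = 1/2 := by intro j hj; simp [hxdef, hj]
  have hxw : x w = 1/2 := by simp [hxdef, hwI]
  have hxO : ∀ j ∈ O, x j = 1 := by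
    intro j hj
    have h1 : j ∉ I := hSI j (hOS hj)
    have h2 : j ≠ w := fun h => hwO (h ▸ hj)
    simp [hxdef, h1, h2, hj]
  have hxZ : ∀ j ∈ Z, x j = 0 := by
    intro j hj
    rw [hZdef, Finset.mem_sdiff, Finset.mem_union] at hj
    have h1 : j ∉ I := fun h => hj.2 (Or.inl h)
    have h2 : j ∉ S := fun h => hj.2 (Or.inr h)
    have h3 : j ≠ w := fun h => h2 (h ▸ hwS)
    have h4 : j ∉ O := fun h => h2 (hOS h)
    simp [hxdef, h1, h3, h4]
  -- decomposition of sums over univ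
  have hdisjIS : Disjoint I S := Finset.disjoint_left.mpr (fun j hjI hjS => hSI j hjS hjI)
  have hsumdec : ∀ y : Fin n → ℝ,
      ∑ j, y j = (∑ j ∈ Z, y j) + ((∑ j ∈ I, y j) + (y w + ∑ j ∈ O, y j)) := by
    intro y
    have h1 : y w + ∑ j ∈ O, y j = ∑ j ∈ S, y j := by
      rw [hOdef]; exact Finset.add_sum_erase _ _ hwS
    rw [h1, ← Finset.sum_union hdisjIS, hZdef]
    exact (Finset.sum_sdiff (Finset.subset_univ _)).symm
  -- pair sums over A l
  have hpair : ∀ l, ({i l, i (l + 1)} : Finset (Fin n)) ⊆ A l := by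
    intro l
    intro j hj
    rcases Finset.mem_insert.mp hj with h | h
    · exact h ▸ (hmem l l).mpr (Or.inl rfl)
    · rw [Finset.mem_singleton] at h
      exact h ▸ (hmem l (l + 1)).mpr (Or.inr rfl)
  have hAl0 : ∀ l, ∀ j ∈ A l, j ∉ ({i l, i (l + 1)} : Finset (Fin n)) →
      (j ∉ I ∧ j ∈ Z) := by
    intro l j hj hjp
    have hjI : j ∉ I := by
      intro hjI
      obtain ⟨m, _, rfl⟩ := Finset.mem_image.mp hjI
      rcases (hmem l m).mp hj with h | h
      · exact hjp (by simp [h])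
      · exact hjp (by simp [h])
    have hjU : j ∈ Finset.univ.biUnion A := Finset.mem_biUnion.mpr ⟨l, Finset.mem_univ _, hj⟩
    have hjS : j ∉ S := fun h => hSU j h hjU
    refine ⟨hjI, ?_⟩
    rw [hZdef, Finset.mem_sdiff, Finset.mem_union]
    exact ⟨Finset.mem_univ _, fun h => h.elim hjI hjS⟩
  have hpairsum : ∀ (y : Fin n → ℝ) l, (∀ j ∈ Z, y j = 0) →
      ∑ j ∈ A l, y j = y (i l) + y (i (l + 1)) := by
    intro y l hZ0
    rw [← Finset.sum_subset (hpair l) (fun j hj hjp => hZ0 j ((hAl0 l j hj hjp).2)),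
      Finset.sum_pair (hine l)]
  -- cast facts
  have hOcardR : (O.card : ℝ) = (k : ℝ) - ν - 1 := by
    rw [hOcard]
    have : k - ν - 1 + (ν + 1) = k := by omega
    have := congrArg (fun m : ℕ => (m : ℝ)) this
    push_cast at this
    linarith
  -- x is in the set
  have hxmem : memHS k n x ∧ (∀ j ∈ Z, x j = 0) ∧ (∀ j ∈ O, x j = 1) ∧
      ∀ B ∈ {B | ∃ l, B = A l}, ∑ j ∈ B, x j = 1 := by
    refine ⟨⟨?_, ?_⟩, hxZ, hxO, ?_⟩
    · intro j
      simp only [hxdef]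
      split_ifs <;> norm_num
    · rw [hsumdec x, Finset.sum_eq_zero hxZ,
        Finset.sum_congr rfl hxI, Finset.sum_congr rfl hxO, hxw]
      rw [Finset.sum_const, Finset.sum_const, hIcard]
      simp only [nsmul_eq_mul, mul_one]
      rw [hOcardR]
      push_cast
      ring
    · rintro B ⟨l, rfl⟩
      rw [hpairsum x l hxZ, hxI _ (Finset.mem_image_of_mem i (Finset.mem_univ l)),
        hxI _ (Finset.mem_image_of_mem i (Finset.mem_univ (l + 1)))]
      norm_num
  refine ⟨{B | ∃ l, B = A l}, le_refl _, Z, O, x, ?_, ?_⟩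
  · apply Set.eq_singleton_iff_unique_mem.mpr
    refine ⟨hxmem, ?_⟩
    rintro y ⟨⟨hybd, hysum⟩, hyZ, hyO, hyA⟩
    have hc : ∀ m, y (i m) = 1/2 := by
      apply oddCycleHalf (fun m => y (i m))
      intro l
      rw [← hpairsum y l hyZ]
      exact hyA (A l) ⟨l, rfl⟩
    have hyw : y w = 1/2 := by
      have h1 := hsumdec y
      rw [Finset.sum_eq_zero hyZ, Finset.sum_congr rfl hyO, Finset.sum_const,
        hysum] at h1
      have h2 : ∑ j ∈ I, y j = (2 * ν + 1) * (1/2) := by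
        rw [hIdef, Finset.sum_image (fun a _ b _ h => hi h)]
        rw [Finset.sum_congr rfl (fun m _ => hc m), Finset.sum_const]
        simp [Finset.card_univ, nsmul_eq_mul]
      rw [h2] at h1
      simp only [nsmul_eq_mul, mul_one] at h1
      rw [hOcardR] at h1
      push_cast at h1
      linarith
    funext j
    by_cases hjI : j ∈ I
    · obtain ⟨m, _, rfl⟩ := Finset.mem_image.mp hjI
      rw [hc m, hxI _ hjI]
    · by_cases hjw : j = w
      · rw [hjw, hyw, hxw]
      · by_cases hjO : j ∈ O
        · rw [hyO j hjO, hxO j hjO]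
        · have hjZ : j ∈ Z := by
            rw [hZdef, Finset.mem_sdiff, Finset.mem_union]
            refine ⟨Finset.mem_univ _, fun h => ?_⟩
            rcases h with h | h
            · exact hjI h
            · rcases Finset.mem_insert.mp ((Finset.insert_erase hwS) ▸ h : j ∈ insert w O) with h' | h'
              · exact hjw h'
              · exact hjO h'
          rw [hyZ j hjZ, hxZ j hjZ]
  · rintro ⟨K, hKcard, hxK⟩
    have h := congrFun hxK w
    rw [hxw] at h
    split_ifs at h <;> norm_num at h
end

section
/- Let {A,B} and {C,D} be two distinct compatible splits of X with A ∩ C = ∅. Then among the pairs of hypersimplex splits from {S_A, S_B, S_C, S_D}, the only possibly incompatible pair is (S_A, S_C), and S_A, S_C are compatible if and only if k = 2 or |A ∪ C| ≥ n − k + 2. -/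
/-- Compatibility of the hypersimplex splits `S_E`, `S_F` of Δ(k,n) defined by
`E, F ⊆ X` (characterization of Herrmann–Joswig). -/
def hsCompat (n k : ℕ) (E F : Finset (Fin n)) : Prop :=
  E ⊆ F ∨ F ⊆ E ∨ n - k + 2 ≤ (E ∪ F).card ∨ (k = 2 ∧ E ∩ F = ∅)

/-- For two distinct compatible splits `{A, Aᶜ}`, `{C, Cᶜ}` of `X` with `A ∩ C = ∅`,
all pairs of hypersimplex splits among `S_A, S_{Aᶜ}, S_C, S_{Cᶜ}` are compatible
except possibly `(S_A, S_C)`, which is compatible iff `k = 2` or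
`|A ∪ C| ≥ n − k + 2`. -/
theorem stmt13 (n k : ℕ) (hk : 1 < k) (hkn : k < n) (A C : Finset (Fin n))
    (hA : 2 ≤ A.card ∧ A.card ≤ n - k) (hB : 2 ≤ Aᶜ.card ∧ Aᶜ.card ≤ n - k)
    (hC : 2 ≤ C.card ∧ C.card ≤ n - k) (hD : 2 ≤ Cᶜ.card ∧ Cᶜ.card ≤ n - k)
    (hdist : A ≠ C ∧ A ≠ Cᶜ) (hAC : A ∩ C = ∅) :
    hsCompat n k A Aᶜ ∧ hsCompat n k A Cᶜ ∧ hsCompat n k Aᶜ C ∧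
    hsCompat n k Aᶜ Cᶜ ∧ hsCompat n k C Cᶜ ∧
    (hsCompat n k A C ↔ (k = 2 ∨ n - k + 2 ≤ (A ∪ C).card)) := by
  have hdisj : Disjoint A C := Finset.disjoint_iff_inter_eq_empty.mpr hAC
  have hACc : A ⊆ Cᶜ := le_compl_iff_disjoint_right.2 hdisj
  have hCAc : C ⊆ Aᶜ := le_compl_iff_disjoint_right.2 hdisj.symm
  have hbig : n - k + 2 ≤ n := by omega
  have huniv : (Finset.univ : Finset (Fin n)).card = n := by simp
  have hselfA : n - k + 2 ≤ (A ∪ Aᶜ).card := by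
    rw [Finset.union_compl, huniv]; exact hbig
  have hselfC : n - k + 2 ≤ (C ∪ Cᶜ).card := by
    rw [Finset.union_compl, huniv]; exact hbig
  have hcc : n - k + 2 ≤ (Aᶜ ∪ Cᶜ).card := by
    rw [← Finset.compl_inter, hAC, Finset.compl_empty, huniv]; exact hbig
  refine ⟨Or.inr (Or.inr (Or.inl hselfA)), Or.inl hACc, Or.inr (Or.inl hCAc),
    Or.inr (Or.inr (Or.inl hcc)), Or.inr (Or.inr (Or.inl hselfC)), ?_⟩
  constructor
  · rintro (h | h | h | ⟨h2, _⟩)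
    · exfalso
      have : A ⊆ A ∩ C := Finset.subset_inter Finset.Subset.rfl h
      rw [hAC] at this
      have := Finset.card_le_card this
      rw [Finset.card_empty] at this
      omega
    · exfalso
      have : C ⊆ A ∩ C := Finset.subset_inter h Finset.Subset.rfl
      rw [hAC] at this
      have := Finset.card_le_card this
      rw [Finset.card_empty] at this
      omega
    · exact Or.inr h
    · exact Or.inl h2
  · rintro (h | h)
    · exact Or.inr (Or.inr (Or.inr ⟨h, hAC⟩))
    · exact Or.inr (Or.inr (Or.inl h))
end

section
/- Let T = (V, E, l) be a tree with positive edge weights l : E → ℝ_{>0}, no degree-two vertices, and leaves labelled bijectively by X. Define D^k_T(K) for each k-subset K of X as the total weight of the minimal subtree of T spanning the leaves in K. Then D^k_T = ∑_{e∈E} l(e) · δ^k_{S_e}, where S_e is the split of X induced by deleting edge e, and δ^k_{S}(K) = 1 if K meets both blocks of S and 0 otherwise. -/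
open scoped Classical

/-- The total weight of a minimal subtree of `G` spanning the vertices `φ '' K`:
the infimum over all edge sets `E' ⊆ E(G)` connecting all the vertices `φ a`,
`a ∈ K`, of the total weight of `E'`. -/
noncomputable def treeDiss {V X : Type*} (G : SimpleGraph V) (ℓ : Sym2 V → ℝ)
    (φ : X → V) (K : Finset X) : ℝ :=
  sInf {r : ℝ | ∃ E' : Finset (Sym2 V), (↑E' : Set (Sym2 V)) ⊆ G.edgeSet ∧
    (∀ a ∈ K, ∀ b ∈ K,
      (SimpleGraph.fromEdgeSet (↑E' : Set (Sym2 V))).Reachable (φ a) (φ b)) ∧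
    r = ∑ e ∈ E', ℓ e}

/-- For a positively weighted tree `G` with no degree-two vertices and leaves
labelled bijectively by `X`, the k-dissimilarity `D^k_T(K)` (weight of the
subtree spanned by `K`) equals `∑_e ℓ(e)·δ^k_{S_e}(K)`, where the split `S_e`
separates the leaves on the two sides of `e` (two leaves are on the same side of
`e` iff they are still connected after deleting `e`). -/
theorem stmt16 {V X : Type*} [Fintype V] [Fintype X] [DecidableEq V]
    (G : SimpleGraph V) (hT : G.IsTree) (ℓ : Sym2 V → ℝ)
    (hpos : ∀ e ∈ G.edgeSet, 0 < ℓ e)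
    (φ : X ≃ {v : V // G.degree v = 1})
    (hdeg2 : ∀ v : V, G.degree v ≠ 2)
    (k : ℕ) (hk : 2 ≤ k) (hkX : k ≤ Fintype.card X)
    (K : Finset X) (hK : K.card = k) :
    treeDiss G ℓ (fun a => ((φ a : {v : V // G.degree v = 1}) : V)) K =
      ∑ e ∈ G.edgeFinset, ℓ e *
        (if ∃ a ∈ K, ∃ b ∈ K,
            ¬(G.deleteEdges {e}).Reachable ((φ a : {v // G.degree v = 1}) : V)
              ((φ b : {v // G.degree v = 1}) : V)
          then 1 else 0) := by
  classical
  set f : X → V := fun a => ((φ a : {v : V // G.degree v = 1}) : V) with hf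
  set sep : Sym2 V → Prop := fun e => ∃ a ∈ K, ∃ b ∈ K,
      ¬(G.deleteEdges {e}).Reachable (f a) (f b) with hsep
  set E₀ : Finset (Sym2 V) := G.edgeFinset.filter sep with hE₀
  have hE₀sub : (↑E₀ : Set (Sym2 V)) ⊆ G.edgeSet := by
    intro e he
    simp only [hE₀, Finset.coe_filter, Set.mem_setOf_eq] at he
    exact SimpleGraph.mem_edgeFinset.mp he.1
  -- Claim A: any connecting edge set contains E₀
  have hA : ∀ (E' : Finset (Sym2 V)), (↑E' : Set (Sym2 V)) ⊆ G.edgeSet →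
      (∀ a ∈ K, ∀ b ∈ K,
        (SimpleGraph.fromEdgeSet (↑E' : Set (Sym2 V))).Reachable (f a) (f b)) →
      E₀ ⊆ E' := by
    intro E' hsub hconn e he
    rw [hE₀, Finset.mem_filter] at he
    obtain ⟨heF, a, ha, b, hb, hab⟩ := he
    have heG : e ∈ G.edgeSet := SimpleGraph.mem_edgeFinset.mp heF
    obtain ⟨p⟩ := hconn a ha b hb
    have hpe : ∀ e' ∈ p.edges, e' ∈ G.edgeSet := by
      intro e' h
      have := p.edges_subset_edgeSet h
      rw [SimpleGraph.edgeSet_fromEdgeSet] at this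
      exact hsub this.1
    by_contra heE'
    -- then p avoids e, so it gives a walk in deleteEdges {e}
    have hpe' : ∀ e' ∈ p.edges, e' ∈ (G.deleteEdges {e}).edgeSet := by
      intro e' h
      rw [SimpleGraph.edgeSet_deleteEdges]
      refine ⟨hpe e' h, ?_⟩
      intro hmem
      rw [Set.mem_singleton_iff] at hmem
      subst hmem
      have := p.edges_subset_edgeSet h
      rw [SimpleGraph.edgeSet_fromEdgeSet] at this
      exact heE' this.1
    exact hab ⟨p.transfer _ hpe'⟩
  -- Claim B: E₀ itself connects the leaves of K
  have hB : ∀ a ∈ K, ∀ b ∈ K,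
      (SimpleGraph.fromEdgeSet (↑E₀ : Set (Sym2 V))).Reachable (f a) (f b) := by
    intro a ha b hb
    obtain ⟨p0⟩ := hT.isConnected (f a) (f b)
    set p : G.Walk (f a) (f b) := ↑p0.toPath with hp
    have hpPath : p.IsPath := p0.toPath.2
    have hedges : ∀ e ∈ p.edges, e ∈ (↑E₀ : Set (Sym2 V)) := by
      intro e he
      have heG : e ∈ G.edgeSet := p.edges_subset_edgeSet he
      have hsepe : sep e := by
        refine ⟨a, ha, b, hb, ?_⟩
        rintro ⟨q⟩
        have hqe : ∀ e' ∈ q.edges, e' ∈ G.edgeSet := by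
          intro e' h
          have := q.edges_subset_edgeSet h
          rw [SimpleGraph.edgeSet_deleteEdges] at this
          exact this.1
        set q' : G.Walk (f a) (f b) := q.transfer G hqe with hq'
        have hq'edges : q'.edges = q.edges := q.edges_transfer hqe
        have huniq : q'.toPath = (⟨p, hpPath⟩ : G.Path (f a) (f b)) :=
          hT.IsAcyclic.path_unique q'.toPath ⟨p, hpPath⟩
        have : e ∈ q'.edges := by
          have h1 : e ∈ (q'.toPath : G.Walk (f a) (f b)).edges := by
            rw [huniq]; exact he
          exact q'.edges_toPath_subset h1
        rw [hq'edges] at this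
        have := q.edges_subset_edgeSet this
        rw [SimpleGraph.edgeSet_deleteEdges] at this
        exact this.2 rfl
      simp only [hE₀, Finset.coe_filter, Set.mem_setOf_eq]
      exact ⟨SimpleGraph.mem_edgeFinset.mpr heG, hsepe⟩
    have hedges' : ∀ e ∈ p.edges,
        e ∈ (SimpleGraph.fromEdgeSet (↑E₀ : Set (Sym2 V))).edgeSet := by
      intro e he
      rw [SimpleGraph.edgeSet_fromEdgeSet]
      exact ⟨hedges e he, G.not_isDiag_of_mem_edgeSet (p.edges_subset_edgeSet he)⟩
    exact ⟨p.transfer _ hedges'⟩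
  -- the candidate value
  set val : ℝ := ∑ e ∈ E₀, ℓ e with hval
  set S : Set ℝ := {r : ℝ | ∃ E' : Finset (Sym2 V), (↑E' : Set (Sym2 V)) ⊆ G.edgeSet ∧
    (∀ a ∈ K, ∀ b ∈ K,
      (SimpleGraph.fromEdgeSet (↑E' : Set (Sym2 V))).Reachable (f a) (f b)) ∧
    r = ∑ e ∈ E', ℓ e} with hS
  have hmem : val ∈ S := ⟨E₀, hE₀sub, hB, rfl⟩
  have hlb : ∀ r ∈ S, val ≤ r := by
    rintro r ⟨E', hsub, hconn, rfl⟩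
    refine Finset.sum_le_sum_of_subset_of_nonneg (hA E' hsub hconn) ?_
    intro i hi _
    exact (hpos i (hsub hi)).le
  have hInf : treeDiss G ℓ f K = val := by
    have h1 : treeDiss G ℓ f K = sInf S := rfl
    rw [h1]
    exact le_antisymm (csInf_le ⟨val, hlb⟩ hmem) (le_csInf ⟨val, hmem⟩ hlb)
  rw [hInf]
  rw [hval, hE₀, Finset.sum_filter]
  refine Finset.sum_congr rfl ?_
  intro e _
  by_cases h : sep e
  · simp [h, hsep, hf]
  · simp [h, hsep, hf]
end

section
/- Let Z be the point in ℝⁿ with x_i = 1 for i in a fixed (k−ν)-subset B∖{m} of X (m ∈ B removed), x_{i_l} = 1/2 for the 2ν+1 distinct indices i₁,...,i_{2ν+1} and for m, and x_i = 0 otherwise, where B ⊂ X∖⋃_{l=1}^{2ν+1} A_l, |B| = k−ν, and the configuration satisfies i_m ∈ A_l iff m ∈ {l,l+1} mod 2ν+1. Then Z lies in Δ(k,n) (its coordinates sum to k and lie in [0,1]) and it satisfies ∑_{i∈A_l} Z_i = 1 for all l = 1,...,2ν+1, but Z is not a vertex of Δ(k,n). -/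
open scoped Classical

/-- The point `Z` (with `Z_i = 1` on `B∖{m₀}`, `Z_i = 1/2` on `{i₁,…,i_{2ν+1}, m₀}`,
`Z_i = 0` otherwise) lies in Δ(k,n), satisfies `∑_{i∈A_l} Z_i = 1` for all `l`,
but is not a vertex of Δ(k,n). -/
theorem stmt18 (n k ν : ℕ) (hν : 1 ≤ ν) (hνk : ν < k) (hkn : k < n)
    (i : Fin (2 * ν + 1) → Fin n) (hi : Function.Injective i)
    (A : Fin (2 * ν + 1) → Finset (Fin n))
    (hmem : ∀ l m : Fin (2 * ν + 1), i m ∈ A l ↔ (m = l ∨ m = l + 1))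
    (B : Finset (Fin n)) (hB : ∀ l, Disjoint B (A l)) (hBcard : B.card = k - ν)
    (m₀ : Fin n) (hm₀ : m₀ ∈ B) :
    ((∀ j, 0 ≤ (fun j : Fin n => if j ∈ B.erase m₀ then (1 : ℝ)
        else if j = m₀ ∨ ∃ l, j = i l then 1 / 2 else 0) j ∧
      (fun j : Fin n => if j ∈ B.erase m₀ then (1 : ℝ)
        else if j = m₀ ∨ ∃ l, j = i l then 1 / 2 else 0) j ≤ 1) ∧
      ∑ j, (fun j : Fin n => if j ∈ B.erase m₀ then (1 : ℝ)
        else if j = m₀ ∨ ∃ l, j = i l then 1 / 2 else 0) j = (k : ℝ)) ∧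
    (∀ l, ∑ j ∈ A l, (fun j : Fin n => if j ∈ B.erase m₀ then (1 : ℝ)
        else if j = m₀ ∨ ∃ l', j = i l' then 1 / 2 else 0) j = 1) ∧
    ¬∃ K : Finset (Fin n), K.card = k ∧
      (fun j : Fin n => if j ∈ B.erase m₀ then (1 : ℝ)
        else if j = m₀ ∨ ∃ l, j = i l then 1 / 2 else 0) =
      fun j => if j ∈ K then 1 else 0 := by
  have hiA : ∀ l, i l ∈ A l := fun l => (hmem l l).2 (Or.inl rfl)
  have hiA' : ∀ l, i (l + 1) ∈ A l := fun l => (hmem l (l + 1)).2 (Or.inr rfl)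
  have hiB : ∀ l, i l ∉ B := fun l h => Finset.disjoint_left.mp (hB l) h (hiA l)
  have hm₀A : ∀ l, m₀ ∉ A l := fun l => Finset.disjoint_left.mp (hB l) hm₀
  have hne : ∀ l : Fin (2 * ν + 1), l ≠ l + 1 := by
    intro l h
    have h0 : (0 : Fin (2 * ν + 1)) = 1 := by
      have := add_left_cancel (a := l) (b := (0 : Fin (2 * ν + 1))) (c := 1)
        (by simpa using h)
      exact this
    have := congrArg Fin.val h0
    simp [Fin.val_one, Nat.mod_eq_of_lt (by omega : 1 < 2 * ν + 1)] at this
  refine ⟨⟨fun j => ?_, ?_⟩, fun l => ?_, ?_⟩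
  · simp only
    split_ifs <;> norm_num
  · -- total sum
    have key : ∀ j : Fin n, (if j ∈ B.erase m₀ then (1 : ℝ)
        else if j = m₀ ∨ ∃ l, j = i l then 1 / 2 else 0)
        = (if j ∈ B.erase m₀ then (1 : ℝ) else 0)
          + (if j = m₀ ∨ ∃ l, j = i l then (1 / 2 : ℝ) else 0) := by
      intro j
      by_cases h1 : j ∈ B.erase m₀
      · have h2 : ¬ (j = m₀ ∨ ∃ l, j = i l) := by
          rintro (rfl | ⟨l, rfl⟩)
          · exact Finset.notMem_erase _ _ h1
          · exact hiB l (Finset.mem_of_mem_erase h1)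
        simp [h1, h2]
      · simp [h1]
    simp only [key, Finset.sum_add_distrib]
    have hs1 : ∑ j : Fin n, (if j ∈ B.erase m₀ then (1 : ℝ) else 0)
        = (B.erase m₀).card := by
      rw [Finset.sum_ite_mem, Finset.univ_inter, Finset.sum_const, nsmul_eq_mul, mul_one]
    have hfilter : Finset.univ.filter (fun j : Fin n => j = m₀ ∨ ∃ l, j = i l)
        = insert m₀ (Finset.image i Finset.univ) := by
      ext j
      simp [eq_comm]
    have hs2 : ∑ j : Fin n, (if j = m₀ ∨ ∃ l, j = i l then (1 / 2 : ℝ) else 0)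
        = (2 * ν + 2 : ℕ) * (1 / 2 : ℝ) := by
      rw [Finset.sum_ite, Finset.sum_const_zero, add_zero, Finset.sum_const,
        nsmul_eq_mul, hfilter]
      congr 2
      rw [Finset.card_insert_of_notMem (by
        simp only [Finset.mem_image, Finset.mem_univ, true_and, not_exists]
        rintro l h
        exact hiB l (h ▸ hm₀)),
        Finset.card_image_of_injective _ hi]
      simp
    rw [hs1, hs2, Finset.card_erase_of_mem hm₀, hBcard]
    have h1 : ((k - ν - 1 : ℕ) : ℝ) = (k : ℝ) - ν - 1 := by
      have h2 : k - ν - 1 = k - (ν + 1) := by omega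
      rw [h2, Nat.cast_sub (by omega)]
      push_cast; ring
    rw [h1]; push_cast; ring
  · -- sum over A l
    have hcong : ∀ j ∈ A l, (if j ∈ B.erase m₀ then (1 : ℝ)
        else if j = m₀ ∨ ∃ l', j = i l' then 1 / 2 else 0)
        = (if j ∈ ({i l, i (l + 1)} : Finset (Fin n)) then (1 / 2 : ℝ) else 0) := by
      intro j hj
      have h1 : j ∉ B.erase m₀ := fun h =>
        Finset.disjoint_left.mp (hB l) (Finset.mem_of_mem_erase h) hj
      have h2 : (j = m₀ ∨ ∃ l', j = i l') ↔ j ∈ ({i l, i (l + 1)} : Finset (Fin n)) := by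
        constructor
        · rintro (rfl | ⟨l', rfl⟩)
          · exact absurd hj (hm₀A l)
          · rcases (hmem l l').1 hj with rfl | rfl <;> simp
        · intro h
          simp only [Finset.mem_insert, Finset.mem_singleton] at h
          rcases h with rfl | rfl
          · exact Or.inr ⟨l, rfl⟩
          · exact Or.inr ⟨l + 1, rfl⟩
      rw [if_neg h1]
      by_cases h : j = m₀ ∨ ∃ l', j = i l'
      · rw [if_pos h, if_pos (h2.1 h)]
      · rw [if_neg h, if_neg (fun hh => h (h2.2 hh))]
    rw [Finset.sum_congr rfl hcong, Finset.sum_ite_mem]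
    have hsub : ({i l, i (l + 1)} : Finset (Fin n)) ⊆ A l := by
      intro j hj
      simp only [Finset.mem_insert, Finset.mem_singleton] at hj
      rcases hj with rfl | rfl
      · exact hiA l
      · exact hiA' l
    rw [Finset.inter_eq_right.2 hsub, Finset.sum_const, Finset.card_pair (fun h => hne l (hi h))]
    norm_num
  · rintro ⟨K, hK, hfe⟩
    have := congrFun hfe m₀
    simp only [Finset.notMem_erase, if_false, if_neg (Finset.notMem_erase m₀ B),
      if_pos (Or.inl rfl : m₀ = m₀ ∨ ∃ l, m₀ = i l)] at this
    split_ifs at this <;> norm_num at this <;> simp_all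
end
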